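/- Let ψ(u) = ( sin(π/2 − u) / (π/2 − u) ) · cos(π/2 − u)^{1/5} and Θ(u) = sin(π/2 − u)⁵ cos(π/2 − u) for u ∈ (0, π/2), and define F(u) = 4 ψ(u) ψ''(u) + ψ(u) Θ(u)^{-1} (Θψ)'(u) − 5 ψ'(u)². Then F(u) + (84/(25π²)) u^{−8/5} = O(u^{−3/5}) as u → 0⁺; equivalently F(u) = −(84/(25π²)) u^{−8/5} + O(u^{−3/5}). -/

import Mathlib

open Real Filter Asymptotics
open scoped Topology

noncomputable section Stmt12aux
namespace Stmt12

def g0 (u : ℝ) : ℝ := Real.cos u / (π/2 - u)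
def g1 (u : ℝ) : ℝ := (Real.cos u - (π/2 - u) * Real.sin u) / (π/2 - u)^2
def g2 (u : ℝ) : ℝ :=
  (2*Real.cos u - 2*(π/2 - u)*Real.sin u - (π/2 - u)^2 * Real.cos u) / (π/2 - u)^3
def Psi (u : ℝ) : ℝ := g0 u * Real.sin u ^ ((1:ℝ)/5)
def Psi1 (u : ℝ) : ℝ := g1 u * Real.sin u ^ ((1:ℝ)/5)
  + g0 u * (1/5 * Real.cos u * Real.sin u ^ ((1:ℝ)/5 - 1))
def Psi2 (u : ℝ) : ℝ := g2 u * Real.sin u ^ ((1:ℝ)/5)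
  + 2 * (g1 u * (1/5 * Real.cos u * Real.sin u ^ ((1:ℝ)/5 - 1)))
  + g0 u * (-(1/5) * Real.sin u ^ ((1:ℝ)/5)
      - 4/25 * Real.cos u ^ 2 * Real.sin u ^ ((1:ℝ)/5 - 2))
def Th (u : ℝ) : ℝ := Real.cos u ^ 5 * Real.sin u
def Th1 (u : ℝ) : ℝ := Real.cos u ^ 6 - 5 * Real.cos u ^ 4 * Real.sin u ^ 2
def EE (u : ℝ) : ℝ := 4 * Psi u * Psi2 u
  + Psi u * (Th u)⁻¹ * (Th1 u * Psi u + Th u * Psi1 u) - 5 * Psi1 u ^ 2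
def PP (u : ℝ) : ℝ := 4 * g0 u * g2 u - 4/5 * g0 u ^ 2 - 5 * g1 u ^ 2 + g0 u * g1 u
  - 5 * g0 u ^ 2 * Real.sin u / Real.cos u
def QQ (u : ℝ) : ℝ := -(2/5) * g0 u * g1 u * Real.cos u + 6/5 * g0 u ^ 2 * Real.cos u
def RR (u : ℝ) : ℝ := -(21/25) * g0 u ^ 2 * Real.cos u ^ 2

lemma hw {u : ℝ} (hu : u ∈ Set.Ioo (0:ℝ) (π/2)) : 0 < π/2 - u := by
  have := hu.2; linarith

lemma hspos {u : ℝ} (hu : u ∈ Set.Ioo (0:ℝ) (π/2)) : 0 < Real.sin u :=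
  Real.sin_pos_of_pos_of_lt_pi hu.1 (lt_trans hu.2 (by linarith [Real.pi_pos]))

lemma hcpos {u : ℝ} (hu : u ∈ Set.Ioo (0:ℝ) (π/2)) : 0 < Real.cos u :=
  Real.cos_pos_of_mem_Ioo ⟨by linarith [hu.1, Real.pi_pos], hu.2⟩

lemma hasDerivAt_sub (u : ℝ) : HasDerivAt (fun t : ℝ => π/2 - t) (-1) u := by
  simpa using (hasDerivAt_id u).const_sub (π/2)

lemma hasDerivAt_g0 {u : ℝ} (hu : u ∈ Set.Ioo (0:ℝ) (π/2)) : HasDerivAt g0 (g1 u) u := by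
  have h := (Real.hasDerivAt_cos u).div (hasDerivAt_sub u) (hw hu).ne'
  refine h.congr_deriv (Eq.symm ?_)
  unfold g1; field_simp; ring

lemma hasDerivAt_g1 {u : ℝ} (hu : u ∈ Set.Ioo (0:ℝ) (π/2)) : HasDerivAt g1 (g2 u) u := by
  have hN : HasDerivAt (fun t : ℝ => Real.cos t - (π/2 - t) * Real.sin t)
      (-(π/2 - u) * Real.cos u) u := by
    have h := (Real.hasDerivAt_cos u).sub ((hasDerivAt_sub u).mul (Real.hasDerivAt_sin u))
    refine h.congr_deriv (Eq.symm ?_); ring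
  have hD : HasDerivAt (fun t : ℝ => (π/2 - t)^2) (2 * (π/2 - u) ^ 1 * (-1)) u :=
    (hasDerivAt_sub u).pow 2
  have h := hN.div hD (pow_ne_zero 2 (hw hu).ne')
  refine h.congr_deriv (Eq.symm ?_)
  unfold g2
  rw [div_eq_div_iff (pow_ne_zero 3 (hw hu).ne')
    (pow_ne_zero 2 (pow_ne_zero 2 (hw hu).ne'))]
  ring

lemma hasDerivAt_srpow {u : ℝ} (hu : u ∈ Set.Ioo (0:ℝ) (π/2)) :
    HasDerivAt (fun t : ℝ => Real.sin t ^ ((1:ℝ)/5))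
      (1/5 * Real.cos u * Real.sin u ^ ((1:ℝ)/5 - 1)) u := by
  have h := (Real.hasDerivAt_sin u).rpow_const (p := (1:ℝ)/5) (Or.inl (hspos hu).ne')
  convert h using 1; ring

lemma hasDerivAt_Psi {u : ℝ} (hu : u ∈ Set.Ioo (0:ℝ) (π/2)) : HasDerivAt Psi (Psi1 u) u := by
  have h := (hasDerivAt_g0 hu).mul (hasDerivAt_srpow hu)
  exact h.congr_deriv rfl

lemma hasDerivAt_Psi1 {u : ℝ} (hu : u ∈ Set.Ioo (0:ℝ) (π/2)) :
    HasDerivAt Psi1 (Psi2 u) u := by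
  have hs := hspos hu
  have hphi : HasDerivAt (fun t : ℝ => 1/5 * Real.cos t * Real.sin t ^ ((1:ℝ)/5 - 1))
      (1/5 * (-Real.sin u) * Real.sin u ^ ((1:ℝ)/5 - 1)
        + 1/5 * Real.cos u * (Real.cos u * ((1:ℝ)/5 - 1) * Real.sin u ^ ((1:ℝ)/5 - 1 - 1))) u := by
    have h1 : HasDerivAt (fun t : ℝ => 1/5 * Real.cos t) (1/5 * (-Real.sin u)) u :=
      (Real.hasDerivAt_cos u).const_mul (1/5)
    have h2 := (Real.hasDerivAt_sin u).rpow_const (p := (1:ℝ)/5 - 1) (Or.inl hs.ne')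
    exact h1.mul h2
  have h := ((hasDerivAt_g1 hu).mul (hasDerivAt_srpow hu)).add
      ((hasDerivAt_g0 hu).mul hphi)
  refine h.congr_deriv (Eq.symm ?_)
  unfold Psi2
  have e1 : Real.sin u ^ ((1:ℝ)/5 - 1) = Real.sin u ^ ((1:ℝ)/5) / Real.sin u := by
    rw [Real.rpow_sub hs, Real.rpow_one]
  have e2 : Real.sin u ^ ((1:ℝ)/5 - 1 - 1) = Real.sin u ^ ((1:ℝ)/5) / Real.sin u / Real.sin u := by
    rw [Real.rpow_sub hs, Real.rpow_sub hs, Real.rpow_one]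
  have e3 : Real.sin u ^ ((1:ℝ)/5 - 2) = Real.sin u ^ ((1:ℝ)/5) / Real.sin u / Real.sin u := by
    rw [show (1:ℝ)/5 - 2 = (1:ℝ)/5 - 1 - 1 by norm_num, e2]
  rw [e1, e2, e3]
  field_simp
  ring

lemma hasDerivAt_Th (u : ℝ) : HasDerivAt Th (Th1 u) u := by
  have h := ((Real.hasDerivAt_cos u).pow 5).mul (Real.hasDerivAt_sin u)
  refine h.congr_deriv (Eq.symm ?_)
  unfold Th1
  push_cast
  simp only [Pi.pow_apply]
  ring

set_option maxHeartbeats 2000000 in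
lemma key_identity {u : ℝ} (hu : u ∈ Set.Ioo (0:ℝ) (π/2)) :
    EE u = PP u * Real.sin u ^ ((2:ℝ)/5) + QQ u * Real.sin u ^ ((-3:ℝ)/5)
      + RR u * Real.sin u ^ ((-8:ℝ)/5) := by
  have hs := hspos hu
  have hc := hcpos hu
  have hwne := (hw hu).ne'
  have hx : (0:ℝ) < Real.sin u ^ ((1:ℝ)/5) := Real.rpow_pos_of_pos hs _
  have e1 : Real.sin u ^ ((1:ℝ)/5 - 1) = Real.sin u ^ ((1:ℝ)/5) / Real.sin u := by
    rw [Real.rpow_sub hs, Real.rpow_one]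
  have e2 : Real.sin u ^ ((1:ℝ)/5 - 2) = Real.sin u ^ ((1:ℝ)/5) / Real.sin u / Real.sin u := by
    rw [show (1:ℝ)/5 - 2 = (1:ℝ)/5 - 1 - 1 by norm_num, Real.rpow_sub hs, e1, Real.rpow_one]
  have e4 : Real.sin u ^ ((2:ℝ)/5) = Real.sin u ^ ((1:ℝ)/5) * Real.sin u ^ ((1:ℝ)/5) := by
    rw [← Real.rpow_add hs]; norm_num
  have e5 : Real.sin u ^ ((-3:ℝ)/5)
      = Real.sin u ^ ((1:ℝ)/5) * Real.sin u ^ ((1:ℝ)/5) / Real.sin u := by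
    rw [show ((-3):ℝ)/5 = (2:ℝ)/5 - 1 by norm_num, Real.rpow_sub hs, e4, Real.rpow_one]
  have e6 : Real.sin u ^ ((-8:ℝ)/5)
      = Real.sin u ^ ((1:ℝ)/5) * Real.sin u ^ ((1:ℝ)/5) / Real.sin u / Real.sin u := by
    rw [show ((-8):ℝ)/5 = (-3:ℝ)/5 - 1 by norm_num, Real.rpow_sub hs, e5, Real.rpow_one]
  unfold EE PP QQ RR Psi Psi1 Psi2 Th Th1 g0 g1 g2
  rw [e1, e2, e4, e5, e6]
  have hs' : Real.sin u ≠ 0 := hs.ne'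
  have hc' : Real.cos u ≠ 0 := hc.ne'
  generalize Real.sin u ^ ((1:ℝ)/5) = x
  generalize hS : Real.sin u = s at hs' ⊢
  generalize hC : Real.cos u = c at hc' ⊢
  generalize hW : π/2 - u = w at hwne ⊢
  field_simp
  ring

lemma pi2ne : (π/2 - 0 : ℝ) ≠ 0 := by
  rw [sub_zero]; positivity

lemma contsub : ContinuousAt (fun t : ℝ => π/2 - t) 0 :=
  (continuous_const.sub continuous_id).continuousAt

lemma contg0 : ContinuousAt g0 0 :=
  Real.continuous_cos.continuousAt.div contsub pi2ne

lemma contg1 : ContinuousAt g1 0 := by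
  apply ContinuousAt.div
  · exact Real.continuous_cos.continuousAt.sub
      (contsub.mul Real.continuous_sin.continuousAt)
  · exact contsub.pow 2
  · exact pow_ne_zero 2 pi2ne

lemma contg2 : ContinuousAt g2 0 := by
  apply ContinuousAt.div
  · exact ((Real.continuous_cos.continuousAt.const_mul 2).sub
      ((contsub.const_mul 2).mul Real.continuous_sin.continuousAt)).sub
      ((contsub.pow 2).mul Real.continuous_cos.continuousAt)
  · exact contsub.pow 3
  · exact pow_ne_zero 3 pi2ne

lemma cos0ne : Real.cos 0 ≠ 0 := by rw [Real.cos_zero]; norm_num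

lemma contPP : ContinuousAt PP 0 := by
  unfold PP
  exact (((((contg0.const_mul 4).mul contg2).sub ((contg0.pow 2).const_mul (4/5))).sub
    ((contg1.pow 2).const_mul 5)).add (contg0.mul contg1)).sub
    ((((contg0.pow 2).const_mul 5).mul Real.continuous_sin.continuousAt).div
      Real.continuous_cos.continuousAt cos0ne)

lemma contQQ : ContinuousAt QQ 0 := by
  unfold QQ
  exact (((contg0.const_mul (-(2/5))).mul contg1).mul Real.continuous_cos.continuousAt).add
    (((contg0.pow 2).const_mul (6/5)).mul Real.continuous_cos.continuousAt)

lemma diffRR : DifferentiableAt ℝ RR 0 := by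
  have hg0 : DifferentiableAt ℝ g0 0 :=
    Real.differentiable_cos.differentiableAt.div
      ((differentiable_const _).sub differentiable_id).differentiableAt pi2ne
  exact ((hg0.pow 2).const_mul (-(21/25))).mul
    (Real.differentiable_cos.differentiableAt.pow 2)

lemma RR0 : RR 0 = -(84/(25*π^2)) := by
  unfold RR g0
  rw [Real.cos_zero, sub_zero]
  have := Real.pi_ne_zero
  field_simp
  ring

lemma evfacts : ∀ᶠ u in 𝓝[>](0:ℝ), 0 < u ∧ u ≤ 1/2 ∧ 3/4*u ≤ Real.sin u
    ∧ Real.sin u ≤ u ∧ u - Real.sin u ≤ u^3/4 := by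
  filter_upwards [Ioc_mem_nhdsGT (by norm_num : (0:ℝ) < 1/2)] with u hu
  obtain ⟨h0, h1⟩ := hu
  have h1' : u ≤ 1 := by linarith
  have hcube := Real.sin_gt_sub_cube h0
  have hlt := Real.sin_lt h0
  have hu2 : u^2 ≤ 1 := by nlinarith
  have hu3 : u^3 ≤ u := by nlinarith [mul_le_mul_of_nonneg_left hu2 h0.le]
  exact ⟨h0, h1, by nlinarith, hlt.le, by linarith [pow_pos h0 3]⟩

lemma bigO_one : (fun _ : ℝ => (1:ℝ)) =O[𝓝[>](0:ℝ)] fun u => u ^ ((-3:ℝ)/5) := by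
  rw [isBigO_iff]
  refine ⟨1, ?_⟩
  filter_upwards [evfacts] with u h
  obtain ⟨h0, h1, -, -, -⟩ := h
  have h2 : u ^ (0:ℝ) ≤ u ^ ((-3:ℝ)/5) :=
    Real.rpow_le_rpow_of_exponent_ge h0 (by linarith) (by norm_num)
  rw [Real.rpow_zero] at h2
  have hpos : 0 < u ^ ((-3:ℝ)/5) := Real.rpow_pos_of_pos h0 _
  rw [norm_one, Real.norm_eq_abs, abs_of_pos hpos]
  linarith

lemma sin_rpow_le {u p : ℝ} (h0 : 0 < u) (hsl : 3/4*u ≤ Real.sin u)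
    (hp2 : -2 ≤ p) (hp0 : p ≤ 0) : Real.sin u ^ p ≤ 2 * u ^ p := by
  have h34 : (0:ℝ) < 3/4*u := by linarith
  have step1 : Real.sin u ^ p ≤ (3/4*u) ^ p :=
    Real.rpow_le_rpow_of_nonpos h34 hsl hp0
  have step2 : ((3:ℝ)/4*u)^p = (3/4:ℝ)^p * u^p := Real.mul_rpow (by norm_num) h0.le
  have step3 : (3/4:ℝ)^p ≤ (3/4:ℝ)^(-2:ℝ) :=
    Real.rpow_le_rpow_of_exponent_ge (by norm_num) (by norm_num) hp2
  have step4 : (3/4:ℝ)^(-2:ℝ) = 16/9 := by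
    rw [show (-2:ℝ) = -(2:ℝ) by norm_num, Real.rpow_neg (by norm_num), Real.rpow_two]
    norm_num
  have hup : 0 < u ^ p := Real.rpow_pos_of_pos h0 _
  calc Real.sin u ^ p ≤ (3/4*u) ^ p := step1
    _ = (3/4:ℝ)^p * u^p := step2
    _ ≤ (16/9) * u^p := by
        apply mul_le_mul_of_nonneg_right _ hup.le
        rw [← step4]; exact step3
    _ ≤ 2 * u^p := by nlinarith

lemma sin_rpow_bigO {p : ℝ} (hp2 : -2 ≤ p) (hp0 : p ≤ 0) :
    (fun u => Real.sin u ^ p) =O[𝓝[>](0:ℝ)] fun u => u ^ p := by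
  rw [isBigO_iff]
  refine ⟨2, ?_⟩
  filter_upwards [evfacts] with u h
  obtain ⟨h0, h1, hsl, hsu, -⟩ := h
  have hspos : 0 < Real.sin u := by nlinarith
  have hup : 0 < u ^ p := Real.rpow_pos_of_pos h0 _
  have hsp : 0 < Real.sin u ^ p := Real.rpow_pos_of_pos hspos _
  rw [Real.norm_eq_abs, Real.norm_eq_abs, abs_of_pos hup, abs_of_pos hsp]
  exact sin_rpow_le h0 hsl hp2 hp0

lemma diff_rpow_bigO : (fun u => u ^ ((-8:ℝ)/5) - Real.sin u ^ ((-8:ℝ)/5))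
    =O[𝓝[>](0:ℝ)] fun u => u ^ ((-3:ℝ)/5) := by
  rw [isBigO_iff]
  refine ⟨1, ?_⟩
  filter_upwards [evfacts] with u h
  obtain ⟨h0, h1, hsl, hsu, hcube⟩ := h
  have hspos : 0 < Real.sin u := by nlinarith
  have hf4 := sin_rpow_le h0 hsl (by norm_num : (-2:ℝ) ≤ (-8:ℝ)/5) (by norm_num)
  have hAB : u ^ ((-8:ℝ)/5) ≤ Real.sin u ^ ((-8:ℝ)/5) :=
    Real.rpow_le_rpow_of_nonpos hspos hsu (by norm_num : ((-8):ℝ)/5 ≤ 0)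
  have f1 : Real.sin u ^ ((-8:ℝ)/5) * (Real.sin u/u) ^ ((8:ℝ)/5) = u ^ ((-8:ℝ)/5) := by
    rw [Real.div_rpow hspos.le h0.le,
      show ((-8):ℝ)/5 = -((8:ℝ)/5) by norm_num,
      Real.rpow_neg hspos.le, Real.rpow_neg h0.le]
    have h1' := (Real.rpow_pos_of_pos hspos ((8:ℝ)/5)).ne'
    have h2' := (Real.rpow_pos_of_pos h0 ((8:ℝ)/5)).ne'
    field_simp
  have f2 : (Real.sin u/u) * (Real.sin u/u) ≤ (Real.sin u/u) ^ ((8:ℝ)/5) := by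
    have h2 := Real.rpow_le_rpow_of_exponent_ge (div_pos hspos h0)
      ((div_le_one h0).mpr hsu) (by norm_num : (8:ℝ)/5 ≤ 2)
    rw [Real.rpow_two, pow_two] at h2
    exact h2
  have f3 : 1 - Real.sin u/u ≤ u^2/4 := by
    rw [← mul_le_mul_iff_left₀ h0]
    have h' : (1 - Real.sin u/u)*u = u - Real.sin u := by field_simp
    rw [h']
    nlinarith
  have g6 : u ^ ((-8:ℝ)/5) * u^2 = u ^ ((2:ℝ)/5) := by
    rw [← Real.rpow_natCast u 2, ← Real.rpow_add h0]
    norm_num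
  have g7 : u ^ ((2:ℝ)/5) ≤ u ^ ((-3:ℝ)/5) :=
    Real.rpow_le_rpow_of_exponent_ge h0 (by linarith) (by norm_num)
  have hpos3 : 0 < u ^ ((-3:ℝ)/5) := Real.rpow_pos_of_pos h0 _
  have hrpos : 0 < Real.sin u / u := div_pos hspos h0
  have hrle : Real.sin u / u ≤ 1 := (div_le_one h0).mpr hsu
  -- now generalize to pure arithmetic
  have hall : (0 < Real.sin u / u) ∧ (Real.sin u / u ≤ 1)
      ∧ (u ^ ((-8:ℝ)/5) ≤ Real.sin u ^ ((-8:ℝ)/5))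
      ∧ (Real.sin u ^ ((-8:ℝ)/5) ≤ 2 * u ^ ((-8:ℝ)/5))
      ∧ (Real.sin u ^ ((-8:ℝ)/5) * (Real.sin u/u) ^ ((8:ℝ)/5) = u ^ ((-8:ℝ)/5))
      ∧ ((Real.sin u/u) * (Real.sin u/u) ≤ (Real.sin u/u) ^ ((8:ℝ)/5))
      ∧ (1 - Real.sin u/u ≤ u^2/4) ∧ (0 < u ^ ((-8:ℝ)/5)) :=
    ⟨hrpos, hrle, hAB, hf4, f1, f2, f3, Real.rpow_pos_of_pos h0 _⟩
  clear hrpos hrle hAB hf4 f1 f2 f3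
  revert hall
  generalize Real.sin u / u = r
  generalize Real.sin u ^ ((-8:ℝ)/5) = A
  generalize hB : u ^ ((-8:ℝ)/5) = B
  rw [hB] at g6
  generalize r ^ ((8:ℝ)/5) = q
  rintro ⟨hrpos, hrle, hAB, hf4, f1, f2, f3, hBpos⟩
  have hApos : 0 < A := lt_of_lt_of_le hBpos hAB
  have key : A - B ≤ u ^ ((-3:ℝ)/5) := by
    have g1 : A - B = A * (1 - q) := by rw [mul_sub, mul_one, f1]
    have e1 : A * (1 - q) ≤ A * (1 - r*r) := by nlinarith
    have e2 : A * (1 - r*r) ≤ 2*B * (1 - r*r) := by nlinarith [sq_nonneg (1-r)]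
    have e3 : 2*B * (1 - r*r) ≤ 2*B*(2*(1 - r)) := by nlinarith [sq_nonneg (1-r)]
    have g5 : 2*B*(2*(1-r)) ≤ B*u^2 := by nlinarith
    linarith
  rw [Real.norm_eq_abs, Real.norm_eq_abs, abs_of_nonpos (by linarith : B - A ≤ 0),
    abs_of_pos hpos3, one_mul]
  linarith

lemma RRbigO : (fun u => RR u + 84/(25*π^2)) =O[𝓝[>](0:ℝ)] fun u => u := by
  have h := diffRR.isBigO_sub
  rw [RR0] at h
  have h' := h.mono (nhdsWithin_le_nhds : 𝓝[>](0:ℝ) ≤ 𝓝 0)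
  simpa [sub_neg_eq_add, sub_zero] using h'

end Stmt12
end Stmt12aux

/-- For `m = 6`: with `ψ(u) = (sin(π/2−u)/(π/2−u)) · cos(π/2−u)^{1/5}`,
`Θ(u) = sin(π/2−u)^5 cos(π/2−u)` and
`F(u) = 4 ψψ'' + ψΘ⁻¹(Θψ)' − 5 (ψ')²`, one has
`F(u) = −(84/(25 π²)) u^{−8/5} + O(u^{−3/5})` as `u → 0⁺`. -/
theorem stmt12 (ψ Θ F : ℝ → ℝ)
    (hψ : ∀ u, ψ u = (Real.sin (π / 2 - u) / (π / 2 - u)) *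
        Real.cos (π / 2 - u) ^ ((1 : ℝ) / 5))
    (hΘ : ∀ u, Θ u = Real.sin (π / 2 - u) ^ 5 * Real.cos (π / 2 - u))
    (hF : ∀ u, F u = 4 * ψ u * deriv (deriv ψ) u
        + ψ u * (Θ u)⁻¹ * deriv (fun t => Θ t * ψ t) u
        - 5 * (deriv ψ u) ^ 2) :
    (fun u => F u + (84 / (25 * π ^ 2)) * u ^ (-(8 : ℝ) / 5)) =O[𝓝[>] (0 : ℝ)]
      fun u => u ^ (-(3 : ℝ) / 5) := by
  have hψΨ : ψ = Stmt12.Psi := funext fun u => by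
    rw [hψ u, Real.sin_pi_div_two_sub, Real.cos_pi_div_two_sub]; rfl
  have hΘT : Θ = Stmt12.Th := funext fun u => by
    rw [hΘ u, Real.sin_pi_div_two_sub, Real.cos_pi_div_two_sub]; rfl
  subst hψΨ; subst hΘT
  have hmem : Set.Ioo (0:ℝ) (π/2) ∈ 𝓝[>](0:ℝ) :=
    Ioo_mem_nhdsGT Real.pi_div_two_pos
  have hFE : (fun u => F u + (84 / (25 * π ^ 2)) * u ^ (-(8:ℝ)/5))
      =ᶠ[𝓝[>](0:ℝ)] (fun u => Stmt12.PP u * Real.sin u ^ ((2:ℝ)/5)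
        + (Stmt12.QQ u * Real.sin u ^ ((-3:ℝ)/5)
        + ((Stmt12.RR u + 84/(25*π^2)) * Real.sin u ^ ((-8:ℝ)/5)
        + 84/(25*π^2) * (u ^ ((-8:ℝ)/5) - Real.sin u ^ ((-8:ℝ)/5))))) := by
    filter_upwards [hmem] with u hu
    rw [hF u]
    have h1 : deriv Stmt12.Psi u = Stmt12.Psi1 u := (Stmt12.hasDerivAt_Psi hu).deriv
    have h2 : deriv (deriv Stmt12.Psi) u = Stmt12.Psi2 u := by
      have hev : deriv Stmt12.Psi =ᶠ[𝓝 u] Stmt12.Psi1 :=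
        Filter.eventually_of_mem (isOpen_Ioo.mem_nhds hu)
          (fun v hv => (Stmt12.hasDerivAt_Psi hv).deriv)
      rw [hev.deriv_eq]
      exact (Stmt12.hasDerivAt_Psi1 hu).deriv
    have h3 : deriv (fun t => Stmt12.Th t * Stmt12.Psi t) u
        = Stmt12.Th1 u * Stmt12.Psi u + Stmt12.Th u * Stmt12.Psi1 u :=
      ((Stmt12.hasDerivAt_Th u).mul (Stmt12.hasDerivAt_Psi hu)).deriv
    rw [h1, h2, h3]
    have hkey := Stmt12.key_identity hu
    unfold Stmt12.EE at hkey
    rw [hkey]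
    ring
  refine hFE.trans_isBigO ?_
  have hT1 : (fun u => Stmt12.PP u * Real.sin u ^ ((2:ℝ)/5)) =O[𝓝[>](0:ℝ)]
      fun u => u ^ ((-3:ℝ)/5) := by
    have hc : ContinuousAt (fun u => Stmt12.PP u * Real.sin u ^ ((2:ℝ)/5)) 0 :=
      Stmt12.contPP.mul
        (Real.continuous_sin.continuousAt.rpow_const (Or.inr (by norm_num)))
    exact ((hc.tendsto.mono_left nhdsWithin_le_nhds).isBigO_one ℝ).trans Stmt12.bigO_one
  have hT2 : (fun u => Stmt12.QQ u * Real.sin u ^ ((-3:ℝ)/5)) =O[𝓝[>](0:ℝ)]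
      fun u => u ^ ((-3:ℝ)/5) := by
    have h := ((Stmt12.contQQ.tendsto.mono_left nhdsWithin_le_nhds).isBigO_one ℝ).mul
      (Stmt12.sin_rpow_bigO (by norm_num) (by norm_num) (p := (-3:ℝ)/5))
    simpa using h
  have hT3 : (fun u => (Stmt12.RR u + 84/(25*π^2)) * Real.sin u ^ ((-8:ℝ)/5))
      =O[𝓝[>](0:ℝ)] fun u => u ^ ((-3:ℝ)/5) := by
    have h := Stmt12.RRbigO.mul
      (Stmt12.sin_rpow_bigO (by norm_num) (by norm_num) (p := (-8:ℝ)/5))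
    refine h.congr' EventuallyEq.rfl ?_
    filter_upwards [self_mem_nhdsWithin] with u hu
    have hu0 : (0:ℝ) < u := hu
    rw [show ((-3):ℝ)/5 = 1 + (-8:ℝ)/5 by norm_num, Real.rpow_add hu0, Real.rpow_one]
  have hT4 : (fun u => 84/(25*π^2) * (u ^ ((-8:ℝ)/5) - Real.sin u ^ ((-8:ℝ)/5)))
      =O[𝓝[>](0:ℝ)] fun u => u ^ ((-3:ℝ)/5) :=
    Stmt12.diff_rpow_bigO.const_mul_left _
  exact hT1.add (hT2.add (hT3.add hT4))
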